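/- Fix integers m ≥ 1 and l, and define σχ^l_{h,s}(x,y) = conj(χ^l_{h,s}(y,x)). Then for all h, h' ∈ ℤ/mℤ, all s, s' ∈ {0,1,…,m−1}, and all x, y ∈ ℤ/mℤ: Σ_{x₁ ∈ ℤ/mℤ} γ^l_y(x₁, x−x₁)·σχ^l_{h,s}(x₁,y)·σχ^l_{h',s'}(x−x₁,y) equals m·σχ^l_{h,s}(x,y) if (h,s) = (h',s'), and equals 0 otherwise. (This is the fusion rule mul(S⁻¹χ_ρ ⊗ S⁻¹χ_{ρ'}) = δ_{ρ,ρ'}·(#Γ/dim χ_ρ)·S⁻¹χ_ρ for Γ = ℤ/mℤ, where all irreducible characters have dimension 1.) -/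

import Mathlib

/-- `ζ_n = exp(2πi/n)`. -/
noncomputable def zetaC (n : ℕ) : ℂ := Complex.exp (2 * Real.pi * Complex.I / n)

/-- The 3-cocycle `ω_l(x,y,z) = ζ_m^{l·x̃·⌊(ỹ+z̃)/m⌋}` on `ℤ/mℤ`. -/
noncomputable def omegaL (m : ℕ) (l : ℤ) (x y z : ZMod m) : ℂ :=
  zetaC m ^ (l * (x.val : ℤ) * (((y.val + z.val) / m : ℕ) : ℤ))

/-- `γ^l_h(x,y) = ω_l(h,x,y)·ω_l(x,y,h)/ω_l(x,h,y)`. -/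
noncomputable def gammaL (m : ℕ) (l : ℤ) (h x y : ZMod m) : ℂ :=
  omegaL m l h x y * omegaL m l x y h / omegaL m l x h y

/-- The irreducible character `χ^l_{h,s}` of the twisted quantum double `D^{ω_l}(ℤ/mℤ)`. -/
noncomputable def chiL (m : ℕ) (l : ℤ) (h : ZMod m) (s : ℤ) (x y : ZMod m) : ℂ :=
  if x = h then zetaC (m ^ 2) ^ ((l * (h.val : ℤ) + m * s) * (y.val : ℤ)) else 0

/-- `σχ^l_{h,s}(x,y) = conj(χ^l_{h,s}(y,x))`, the `S⁻¹`-transform of `χ^l_{h,s}`. -/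
noncomputable def sigmaChiL (m : ℕ) (l : ℤ) (h : ZMod m) (s : ℤ) (x y : ZMod m) : ℂ :=
  (starRingEnd ℂ) (chiL m l h s y x)

lemma zetaC_ne_zero (n : ℕ) : zetaC n ≠ 0 := Complex.exp_ne_zero _

lemma zetaC_isPrimitiveRoot (n : ℕ) [NeZero n] : IsPrimitiveRoot (zetaC n) n :=
  Complex.isPrimitiveRoot_exp n (NeZero.ne n)

lemma zetaC_pow_self (n : ℕ) [NeZero n] : zetaC n ^ (n : ℤ) = 1 := by
  rw [zpow_natCast]; exact (zetaC_isPrimitiveRoot n).pow_eq_one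

lemma zetaC_conj (n : ℕ) : (starRingEnd ℂ) (zetaC n) = (zetaC n)⁻¹ := by
  unfold zetaC
  rw [← Complex.exp_conj, ← Complex.exp_neg]
  simp only [map_div₀, map_mul, Complex.conj_I, Complex.conj_ofReal, Complex.conj_ofNat,
    map_natCast]
  ring

lemma zetaC_conj_zpow (n : ℕ) (k : ℤ) :
    (starRingEnd ℂ) (zetaC n ^ k) = zetaC n ^ (-k) := by
  rw [map_zpow₀, zetaC_conj, inv_zpow, ← zpow_neg]

lemma zetaC_sq (m : ℕ) [NeZero m] (k : ℤ) :
    zetaC m ^ k = zetaC (m ^ 2) ^ ((m : ℤ) * k) := by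
  have hm : (m : ℂ) ≠ 0 := Nat.cast_ne_zero.mpr (NeZero.ne m)
  have h1 : zetaC (m ^ 2) ^ (m : ℤ) = zetaC m := by
    rw [zpow_natCast]
    unfold zetaC
    rw [← Complex.exp_nat_mul]
    congr 1
    push_cast
    field_simp
  rw [← h1, ← zpow_mul]

lemma zetaC_sq_zpow_congr (m : ℕ) [NeZero m] {a b : ℤ} (k : ℤ) (h : a = b + (m ^ 2 : ℤ) * k) :
    zetaC (m ^ 2) ^ a = zetaC (m ^ 2) ^ b := by
  haveI : NeZero (m ^ 2) := ⟨pow_ne_zero 2 (NeZero.ne m)⟩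
  subst h
  have h2 : ((m : ℤ) ^ 2) = ((m ^ 2 : ℕ) : ℤ) := by push_cast; ring
  rw [zpow_add₀ (zetaC_ne_zero _), h2, zpow_mul, zetaC_pow_self, one_zpow, mul_one]

lemma zetaC_zpow_add (n : ℕ) (a b : ℤ) : zetaC n ^ (a + b) = zetaC n ^ a * zetaC n ^ b :=
  zpow_add₀ (zetaC_ne_zero n) a b

lemma sum_val_zmod (m : ℕ) [NeZero m] (f : ℕ → ℂ) :
    ∑ a : ZMod m, f a.val = ∑ i ∈ Finset.range m, f i := by
  refine Finset.sum_nbij' (fun a : ZMod m => a.val) (fun i => (i : ZMod m)) ?_ ?_ ?_ ?_ ?_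
  · intro a _; exact Finset.mem_range.mpr (ZMod.val_lt a)
  · intro a _; exact Finset.mem_univ _
  · intro a _; exact ZMod.natCast_rightInverse a
  · intro i hi; exact ZMod.val_cast_of_lt (Finset.mem_range.mp hi)
  · intro a _; rfl

theorem statement6 (m : ℕ) [NeZero m] (l : ℤ) (h h' : ZMod m) (s s' : ℤ)
    (hs : 0 ≤ s ∧ s < m) (hs' : 0 ≤ s' ∧ s' < m) (x y : ZMod m) :
    (∑ x₁ : ZMod m,
        gammaL m l y x₁ (x - x₁) * sigmaChiL m l h s x₁ y * sigmaChiL m l h' s' (x - x₁) y) =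
      if h = h' ∧ s = s' then (m : ℂ) * sigmaChiL m l h s x y else 0 := by
  by_cases hy : y = h ∧ y = h'
  · obtain ⟨rfl, hy'⟩ := hy
    -- now h = y, h' = y
    subst hy'
    have hm : (m : ℤ) ≠ 0 := Int.natCast_ne_zero.mpr (NeZero.ne m)
    set ζ := zetaC (m ^ 2) with hζ
    -- each term
    have key : ∀ x₁ : ZMod m,
        gammaL m l y x₁ (x - x₁) * sigmaChiL m l y s x₁ y * sigmaChiL m l y s' (x - x₁) y =
        (ζ ^ (-(l * (y.val : ℤ) * (x.val : ℤ))) * zetaC m ^ (-(s' * (x.val : ℤ)))) *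
          zetaC m ^ ((s' - s) * (x₁.val : ℤ)) := by
      intro x₁
      set x₂ := x - x₁ with hx₂
      have hsum : x₁ + x₂ = x := by rw [hx₂]; ring
      have hmod : (x₁.val + x₂.val) % m = x.val := by
        rw [← ZMod.val_add, hsum]
      have hn : x₁.val + x₂.val = m * ((x₁.val + x₂.val) / m) + x.val := by
        conv_lhs => rw [← Nat.div_add_mod (x₁.val + x₂.val) m, hmod]
      have hq : (x₁.val : ℤ) + (x₂.val : ℤ) =
          (m : ℤ) * (((x₁.val + x₂.val) / m : ℕ) : ℤ) + (x.val : ℤ) := by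
        exact_mod_cast hn
      set q : ℤ := (((x₁.val + x₂.val) / m : ℕ) : ℤ) with hqdef
      have hgamma : gammaL m l y x₁ x₂ = zetaC m ^ (l * (y.val : ℤ) * q) := by
        unfold gammaL omegaL
        rw [Nat.add_comm x₂.val y.val]
        rw [mul_div_assoc, div_self (zpow_ne_zero _ (zetaC_ne_zero m)), mul_one]
      have hs1 : sigmaChiL m l y s x₁ y = ζ ^ (-((l * (y.val : ℤ) + m * s) * (x₁.val : ℤ))) := by
        unfold sigmaChiL chiL
        rw [if_pos rfl, zetaC_conj_zpow]
      have hs2 : sigmaChiL m l y s' x₂ y = ζ ^ (-((l * (y.val : ℤ) + m * s') * (x₂.val : ℤ))) := by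
        unfold sigmaChiL chiL
        rw [if_pos rfl, zetaC_conj_zpow]
      rw [hgamma, hs1, hs2, zetaC_sq m, zetaC_sq m (-(s' * (x.val:ℤ))), zetaC_sq m ((s'-s) * (x₁.val:ℤ))]
      rw [← hζ, ← zpow_add₀ (zetaC_ne_zero _), ← zpow_add₀ (zetaC_ne_zero _),
        ← zpow_add₀ (zetaC_ne_zero _), ← zpow_add₀ (zetaC_ne_zero _)]
      have hx2val : (x₂.val : ℤ) = (m : ℤ) * q + (x.val : ℤ) - (x₁.val : ℤ) := by
        linarith [hq]
      refine zetaC_sq_zpow_congr m (-s' * q) ?_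
      rw [hx2val]
      ring
    rw [Finset.sum_congr rfl (fun x₁ _ => key x₁), ← Finset.mul_sum]
    have hgs : ∑ x₁ : ZMod m, zetaC m ^ ((s' - s) * (x₁.val : ℤ)) =
        if s = s' then (m : ℂ) else 0 := by
      have hrw : ∀ x₁ : ZMod m, zetaC m ^ ((s' - s) * (x₁.val : ℤ)) =
          (zetaC m ^ (s' - s)) ^ (x₁.val) := by
        intro x₁; rw [← zpow_natCast (zetaC m ^ (s' - s)), ← zpow_mul]
      rw [Finset.sum_congr rfl (fun x₁ _ => hrw x₁),
        sum_val_zmod m (fun i => (zetaC m ^ (s' - s)) ^ i)]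
      by_cases hss : s = s'
      · simp [hss]
      · rw [if_neg hss]
        have hne1 : zetaC m ^ (s' - s) ≠ 1 := by
          intro hcon
          rw [(zetaC_isPrimitiveRoot m).zpow_eq_one_iff_dvd] at hcon
          have hne0 : s' - s ≠ 0 := by omega
          have h1 : (m : ℤ) ≤ |s' - s| :=
            Int.le_of_dvd (abs_pos.mpr hne0) ((dvd_abs _ _).mpr hcon)
          have h2 : |s' - s| < m := abs_lt.mpr ⟨by omega, by omega⟩
          linarith
        rw [geom_sum_eq hne1]
        have : (zetaC m ^ (s' - s)) ^ m = 1 := by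
          rw [← zpow_natCast, ← zpow_mul, mul_comm, zpow_mul, zetaC_pow_self, one_zpow]
        rw [this, sub_self, zero_div]
    rw [hgs]
    by_cases hss : s = s'
    · subst hss
      rw [if_pos (show y = y ∧ s = s from ⟨rfl, rfl⟩)]
      have hfin : sigmaChiL m l y s x y =
          ζ ^ (-((l * (y.val : ℤ) + m * s) * (x.val : ℤ))) := by
        unfold sigmaChiL chiL
        rw [if_pos rfl, zetaC_conj_zpow]
      rw [hfin, zetaC_sq m (-(s * (x.val:ℤ))), ← hζ, ← zpow_add₀ (zetaC_ne_zero _), mul_comm]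
      congr 2
      · simp
      · ring
    · simp [hss]
  · -- degenerate case: some character vanishes
    have hzero : ∀ x₁ : ZMod m,
        gammaL m l y x₁ (x - x₁) * sigmaChiL m l h s x₁ y * sigmaChiL m l h' s' (x - x₁) y = 0 := by
      intro x₁
      rcases not_and_or.mp hy with hyh | hyh'
      · have : sigmaChiL m l h s x₁ y = 0 := by
          unfold sigmaChiL chiL; rw [if_neg hyh]; simp
        rw [this]; ring
      · have : sigmaChiL m l h' s' (x - x₁) y = 0 := by
          unfold sigmaChiL chiL; rw [if_neg hyh']; simp
        rw [this]; ring
    rw [Finset.sum_congr rfl (fun x₁ _ => hzero x₁), Finset.sum_const, smul_zero]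
    by_cases hhh : h = h' ∧ s = s'
    · rw [if_pos hhh]
      have hyh : y ≠ h := fun hc => hy ⟨hc, hhh.1 ▸ hc⟩
      have : sigmaChiL m l h s x y = 0 := by
        unfold sigmaChiL chiL; rw [if_neg hyh]; simp
      rw [this, mul_zero]
    · rw [if_neg hhh]
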